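/- Let F be a field, n a natural number, and Δ a real number. Suppose given a bigraded algebra over F with degree shift n, i.e. F-vector spaces A(k,l) for each positive integer k and each integer l, together with F-bilinear multiplication maps A(k,l) × A(k',l') → A(k+k', l+l'−n). Assume that for every positive integer k there is a real number δ_k > 0 such that A(k,l) ≠ 0 implies kΔ − n ≤ l ≤ kΔ + n − δ_k. Fix a positive integer N and set δ = min{δ_k : 1 ≤ k ≤ N}. Then for every positive integer r with r·δ > 2n and all homogeneous elements w_1,…,w_r with w_i ∈ A(k_i,l_i) and k_i ≤ N for all i, the product w_1·w_2·⋯·w_r is zero. -/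

import Mathlib

/-- The left-nested product `(…((w 0) * (w 1)) * …) * (w (r-1))` of a family of
`r` elements of a (possibly non-associative, non-unital) ring, with junk value `0`
for the empty family. -/
def nprod {V : Type*} [Mul V] [Zero V] : ∀ {r : ℕ}, (Fin r → V) → V
  | 0, _ => 0
  | 1, w => w 0
  | (r + 2), w => nprod (fun i : Fin (r + 1) => w i.castSucc) * w (Fin.last (r + 1))

lemma nprod_eq_zero {V : Type*} [MulZeroClass V] :
    ∀ {r : ℕ} (w : Fin r → V), (∃ i, w i = 0) → nprod w = 0
  | 0, _, _ => rfl
  | 1, w, ⟨i, hi⟩ => by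
    show w 0 = 0
    rwa [Subsingleton.elim (0 : Fin 1) i]
  | (r + 2), w, ⟨i, hi⟩ => by
    show nprod (fun j : Fin (r + 1) => w j.castSucc) * w (Fin.last (r + 1)) = 0
    rcases eq_or_ne i (Fin.last (r + 1)) with h | h
    · rw [← h, hi, mul_zero]
    · obtain ⟨j, rfl⟩ := Fin.exists_castSucc_eq.mpr h
      rw [nprod_eq_zero _ ⟨j, hi⟩, zero_mul]

lemma nprod_mem {F V : Type*} [Field F] [NonUnitalNonAssocRing V] [Module F V]
    (n : ℕ) (A : ℕ → ℤ → Submodule F V)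
    (hmul : ∀ {k k' : ℕ} {l l' : ℤ} {x y : V}, 0 < k → 0 < k' →
      x ∈ A k l → y ∈ A k' l' → x * y ∈ A (k + k') (l + l' - (n : ℤ))) :
    ∀ (r : ℕ) (k : Fin (r + 1) → ℕ) (l : Fin (r + 1) → ℤ) (w : Fin (r + 1) → V),
      (∀ i, 0 < k i) → (∀ i, w i ∈ A (k i) (l i)) →
      nprod w ∈ A (∑ i, k i) (∑ i, l i - (r : ℤ) * n) := by
  intro r
  induction r with
  | zero =>
    intro k l w hk hw
    show w 0 ∈ _
    simpa using hw 0
  | succ r ih =>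
    intro k l w hk hw
    have h1 := ih (fun i => k i.castSucc) (fun i => l i.castSucc)
      (fun i => w i.castSucc) (fun i => hk _) (fun i => hw _)
    have hpos : 0 < ∑ i : Fin (r + 1), k i.castSucc :=
      Finset.sum_pos (fun i _ => hk i.castSucc) Finset.univ_nonempty
    have h2 := hmul hpos (hk (Fin.last (r + 1))) h1 (hw (Fin.last (r + 1)))
    show nprod (fun j : Fin (r + 1) => w j.castSucc) * w (Fin.last (r + 1)) ∈ _
    convert h2 using 2
    · rw [Fin.sum_univ_castSucc]
    · rw [Fin.sum_univ_castSucc]; push_cast; ring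

/-- Quantitative form of non-uniform nilpotency for a bigraded algebra with degree
shift `n` over a field `F` (realized as `F`-subspaces `A k l` of an ambient
`F`-bilinear multiplicative structure `V`): if for every positive integer `k` there
is `δ k > 0` with `A k l ≠ 0 → k•Δ - n ≤ l ≤ k•Δ + n - δ k`, and `N` is a fixed
positive integer with `δmin = min {δ k : 1 ≤ k ≤ N}`, then every product of `r`
homogeneous elements with all first degrees `k i ≤ N` vanishes as soon as
`r * δmin > 2 * n`. -/
theorem bigraded_support_quantitative_nilpotent
    {F V : Type*} [Field F] [NonUnitalNonAssocRing V] [Module F V]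
    [SMulCommClass F V V] [IsScalarTower F V V]
    (n : ℕ) (Δ : ℝ)
    (A : ℕ → ℤ → Submodule F V)
    (hmul : ∀ {k k' : ℕ} {l l' : ℤ} {x y : V}, 0 < k → 0 < k' →
      x ∈ A k l → y ∈ A k' l' → x * y ∈ A (k + k') (l + l' - (n : ℤ)))
    (δ : ℕ → ℝ) (hδ : ∀ k : ℕ, 0 < k → 0 < δ k)
    (hsupp : ∀ (k : ℕ) (l : ℤ), 0 < k → A k l ≠ ⊥ →
      (k : ℝ) * Δ - (n : ℝ) ≤ (l : ℝ) ∧ (l : ℝ) ≤ (k : ℝ) * Δ + (n : ℝ) - δ k)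
    (N : ℕ) (hN : 0 < N) :
    ∀ r : ℕ, 0 < r →
      2 * (n : ℝ) < (r : ℝ) * ((Finset.Icc 1 N).inf' ⟨1, Finset.mem_Icc.mpr ⟨le_refl 1, hN⟩⟩ δ) →
      ∀ (k : Fin r → ℕ) (l : Fin r → ℤ) (w : Fin r → V),
        (∀ i, 0 < k i) → (∀ i, k i ≤ N) → (∀ i, w i ∈ A (k i) (l i)) →
        nprod w = 0 := by
  intro r hr hrδ k l w hk hkN hw
  set δmin := (Finset.Icc 1 N).inf' ⟨1, Finset.mem_Icc.mpr ⟨le_refl 1, hN⟩⟩ δ with hδmin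
  obtain ⟨r', rfl⟩ : ∃ r', r = r' + 1 := ⟨r - 1, (Nat.succ_pred_eq_of_pos hr).symm⟩
  by_contra hne
  have hmem := nprod_mem n A hmul r' k l w hk hw
  set K := ∑ i, k i with hK
  set L := ∑ i, l i - (r' : ℤ) * n with hL
  have hKpos : 0 < K := Finset.sum_pos (fun i _ => hk i) Finset.univ_nonempty
  have hAbot : A K L ≠ ⊥ := Submodule.ne_bot_iff _ |>.mpr ⟨_, hmem, hne⟩
  have hlow := (hsupp K L hKpos hAbot).1
  -- each factor is nonzero, so its bidegree space is nonzero
  have hup : ∀ i, (l i : ℝ) ≤ (k i : ℝ) * Δ + (n : ℝ) - δmin := by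
    intro i
    have hwne : w i ≠ 0 := fun h => hne (nprod_eq_zero w ⟨i, h⟩)
    have hib : A (k i) (l i) ≠ ⊥ := Submodule.ne_bot_iff _ |>.mpr ⟨_, hw i, hwne⟩
    have := (hsupp (k i) (l i) (hk i) hib).2
    have hle : δmin ≤ δ (k i) :=
      Finset.inf'_le δ (Finset.mem_Icc.mpr ⟨hk i, hkN i⟩)
    linarith
  have hsum : (∑ i, (l i : ℝ)) ≤ (∑ i, ((k i : ℝ) * Δ + (n : ℝ) - δmin)) :=
    Finset.sum_le_sum fun i _ => hup i
  have hsum' : (∑ i, ((k i : ℝ) * Δ + (n : ℝ) - δmin))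
      = (K : ℝ) * Δ + (r' + 1 : ℝ) * n - (r' + 1 : ℝ) * δmin := by
    rw [Finset.sum_sub_distrib, Finset.sum_add_distrib, ← Finset.sum_mul, hK]
    push_cast
    simp [Finset.sum_const]
  have hLcast : (L : ℝ) = (∑ i, (l i : ℝ)) - (r' : ℝ) * n := by
    rw [hL]; push_cast; ring
  have hrcast : ((r' + 1 : ℕ) : ℝ) = (r' + 1 : ℝ) := by push_cast; ring
  rw [hrcast] at hrδ
  linarith
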